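/- Let (X, φ) be a partial dynamical system (X locally compact Hausdorff, Δ ⊆ X open, φ : Δ → X continuous proper) and Y ⊆ X a closed set with X ∖ φ(Δ) ⊆ Y, and let (X̃, φ̃) be the reversible Y-extension. Then φ̃ is topologically free (for every n ≥ 1, the set of x̂ in the domain of φ̃ⁿ with φ̃ⁿ(x̂) = x̂ has empty interior in X̃) if and only if φ is topologically free outside Y, i.e. the set of points x ∈ X such that for some n ≥ 1 the iterate φⁿ is defined at x with φⁿ(x) = x, the orbit O(x) = {x, φ(x), …, φ^{n−1}(x)} satisfies O(x) ∩ Y = ∅, and O(x) has no entrance (there is no y ∈ Δ with y ∉ O(x) and φ(y) ∈ O(x)), has empty interior in X. -/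

import Mathlib

/-! Reversible `Y`-extension of a partial dynamical system `(X, φ)`.
The ambient space is `ℕ → X ⊕ Unit`, with `Sum.inr ()` playing the role of the isolated
point `0` of the disjoint union `X ⊔ {0}`, and the product topology. -/

/-- The set `X_N` of finite chains `(x₀, …, x_N, 0, 0, …)` with `x_n ∈ Δ`,
`φ(x_n) = x_{n-1}` for `1 ≤ n ≤ N`, and `x_N ∈ Y`. -/
def XFin {X : Type*} (Δ : Set X) (φ : Δ → X) (Y : Set X) (N : ℕ) :
    Set (ℕ → X ⊕ Unit) :=
  {f | ∃ x : ℕ → X, (∀ n ≤ N, f n = Sum.inl (x n)) ∧ (∀ n, N < n → f n = Sum.inr ()) ∧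
        (∀ n, 1 ≤ n → n ≤ N → ∃ h : x n ∈ Δ, φ ⟨x n, h⟩ = x (n - 1)) ∧ x N ∈ Y}

/-- The set `X_∞` of infinite chains `(x₀, x₁, …)` with `x_n ∈ Δ`, `φ(x_n) = x_{n-1}`. -/
def XInfSet {X : Type*} (Δ : Set X) (φ : Δ → X) : Set (ℕ → X ⊕ Unit) :=
  {f | ∃ x : ℕ → X, (∀ n, f n = Sum.inl (x n)) ∧
        ∀ n, 1 ≤ n → ∃ h : x n ∈ Δ, φ ⟨x n, h⟩ = x (n - 1)}

/-- The space `X̃ = (⋃ N, X_N) ∪ X_∞` of the reversible `Y`-extension, carrying the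
subspace topology of the product topology. -/
def XExt {X : Type*} (Δ : Set X) (φ : Δ → X) (Y : Set X) : Set (ℕ → X ⊕ Unit) :=
  (⋃ N, XFin Δ φ Y N) ∪ XInfSet Δ φ

open Classical in
/-- The ambient extension of the map `φ̃(x₀, x₁, …) = (φ(x₀), x₀, x₁, …)`. -/
noncomputable def phiT {X : Type*} (Δ : Set X) (φ : Δ → X) (f : ℕ → X ⊕ Unit) :
    ℕ → X ⊕ Unit :=
  fun n =>
    match n with
    | 0 =>
      match f 0 with
      | Sum.inl x => if h : x ∈ Δ then Sum.inl (φ ⟨x, h⟩) else Sum.inr ()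
      | Sum.inr _ => Sum.inr ()
    | Nat.succ m => f m

open Function Set

section Aux

variable {X : Type*} {Δ : Set X} {φ : Δ → X} {Y : Set X}

open Classical in
/-- Total extension of `φ` by the identity off `Δ`. -/
noncomputable def phiX (Δ : Set X) (φ : Δ → X) : X → X :=
  fun x => if h : x ∈ Δ then φ ⟨x, h⟩ else x

lemma phiX_eq {x : X} (h : x ∈ Δ) : phiX Δ φ x = φ ⟨x, h⟩ := by
  simp [phiX, h]

/-- The set of `φ̃`-periodic points of period `n`. -/
def Shat (Δ : Set X) (φ : Δ → X) (Y : Set X) (n : ℕ) : Set (XExt Δ φ Y) :=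
  {f | ∃ orb : ℕ → XExt Δ φ Y, orb 0 = f ∧ orb n = f ∧
      ∀ i : ℕ,
        (∃ x ∈ Δ, ((orb i : XExt Δ φ Y) : ℕ → X ⊕ Unit) 0 = Sum.inl x) ∧
        phiT Δ φ ((orb i : XExt Δ φ Y) : ℕ → X ⊕ Unit) =
          ((orb (i + 1) : XExt Δ φ Y) : ℕ → X ⊕ Unit)}

/-- The set of `φ`-periodic points whose orbit avoids `Y` and has no entrance. -/
def Sper (Δ : Set X) (φ : Δ → X) (Y : Set X) : Set X :=
  {x : X | ∃ n : ℕ, 1 ≤ n ∧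
    ∃ orb : ℕ → X, orb 0 = x ∧ orb n = x ∧
      (∀ i : ℕ, ∃ h : orb i ∈ Δ, φ ⟨orb i, h⟩ = orb (i + 1)) ∧
      (∀ i < n, orb i ∉ Y) ∧
      ¬∃ (y : X) (hy : y ∈ Δ), (∀ i < n, y ≠ orb i) ∧
        ∃ i < n, φ ⟨y, hy⟩ = orb i}

lemma phiT_succ (f : ℕ → X ⊕ Unit) (m : ℕ) : phiT Δ φ f (m + 1) = f m := rfl

lemma phiT_zero {f : ℕ → X ⊕ Unit} {v : X} (hf : f 0 = Sum.inl v) (hv : v ∈ Δ) :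
    phiT Δ φ f 0 = Sum.inl (phiX Δ φ v) := by
  simp [phiT, hf, hv, phiX_eq hv]

lemma Shat_spec {n : ℕ} {f : XExt Δ φ Y} (hf : f ∈ Shat Δ φ Y n) :
    (∀ j, (f : ℕ → X ⊕ Unit) (j + n) = (f : ℕ → X ⊕ Unit) j) ∧
      ∃ x ∈ Δ, (f : ℕ → X ⊕ Unit) 0 = Sum.inl x := by
  obtain ⟨orb, h0, hn, hstep⟩ := hf
  have key : ∀ i j, ((orb i : XExt Δ φ Y) : ℕ → X ⊕ Unit) (j + i) = (f : ℕ → X ⊕ Unit) j := by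
    intro i
    induction i with
    | zero => intro j; rw [h0, Nat.add_zero]
    | succ i ih =>
      intro j
      have h1 : ((orb (i + 1) : XExt Δ φ Y) : ℕ → X ⊕ Unit) (j + i + 1)
          = ((orb i : XExt Δ φ Y) : ℕ → X ⊕ Unit) (j + i) := by
        rw [← (hstep i).2]
        rfl
      rw [show j + (i + 1) = j + i + 1 by omega, h1, ih j]
  constructor
  · intro j
    have := key n j
    rw [hn] at this
    exact this
  · have := (hstep 0).1
    rwa [h0] at this

lemma fin_not_periodic {n N : ℕ} (hn : 1 ≤ n) {g : ℕ → X ⊕ Unit}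
    (hg : g ∈ XFin Δ φ Y N) (hper : ∀ j, g (j + n) = g j)
    (hhead : ∃ x : X, g 0 = Sum.inl x) : False := by
  obtain ⟨x, h1, h2, _, _⟩ := hg
  obtain ⟨x0, hx0⟩ := hhead
  have hmul : ∀ k, g (k * n) = g 0 := by
    intro k
    induction k with
    | zero => rw [Nat.zero_mul]
    | succ k ih => rw [Nat.succ_mul, hper, ih]
  have hgt : N < (N + 1) * n := by
    have : (N + 1) * 1 ≤ (N + 1) * n := Nat.mul_le_mul_left _ hn
    omega
  have h3 : g ((N + 1) * n) = Sum.inr () := h2 _ hgt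
  rw [hmul, hx0] at h3
  exact Sum.inl_ne_inr h3

lemma chain_iter {y : ℕ → X} (hc : ∀ j, 1 ≤ j → y j ∈ Δ ∧ phiX Δ φ (y j) = y (j - 1)) :
    ∀ (s j : ℕ), (phiX Δ φ)^[s] (y (j + s)) = y j := by
  intro s
  induction s with
  | zero => intro j; rfl
  | succ s ih =>
    intro j
    rw [show j + (s + 1) = (j + s) + 1 by omega, Function.iterate_succ_apply]
    have h2 := (hc ((j + s) + 1) (by omega)).2
    rw [h2, Nat.add_sub_cancel]
    exact ih j

lemma inf_of_periodic {n : ℕ} (hn : 1 ≤ n) {g : ℕ → X ⊕ Unit}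
    (hg : g ∈ XExt Δ φ Y) (hper : ∀ j, g (j + n) = g j)
    (hhead : ∃ x ∈ Δ, g 0 = Sum.inl x) :
    ∃ y : ℕ → X, (∀ j, g j = Sum.inl (y j)) ∧
      (∀ j, 1 ≤ j → y j ∈ Δ ∧ phiX Δ φ (y j) = y (j - 1)) ∧
      (∀ j, y (j + n) = y j) ∧ y 0 ∈ Δ := by
  rcases hg with hfin | hinf
  · obtain ⟨N, hN⟩ := Set.mem_iUnion.mp hfin
    obtain ⟨x, hxΔ, hx⟩ := hhead
    exact absurd hx (by exact fun hx => fin_not_periodic hn hN hper ⟨x, hx⟩)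
  · obtain ⟨y, h1, h2⟩ := hinf
    refine ⟨y, h1, ?_, ?_, ?_⟩
    · intro j hj
      obtain ⟨h, he⟩ := h2 j hj
      exact ⟨h, by rw [phiX_eq h, he]⟩
    · intro j
      have := hper j
      rw [h1, h1] at this
      exact Sum.inl.inj this
    · obtain ⟨x, hxΔ, hx⟩ := hhead
      rw [h1] at hx
      rwa [Sum.inl.inj hx]

lemma iter_mod {w : X} {n : ℕ} (hw : (phiX Δ φ)^[n] w = w) :
    ∀ a, (phiX Δ φ)^[a] w = (phiX Δ φ)^[a % n] w := by
  intro a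
  induction a using Nat.strong_induction_on with
  | _ a ih =>
    rcases Nat.lt_or_ge a n with h | h
    · rw [Nat.mod_eq_of_lt h]
    · rcases Nat.eq_zero_or_pos n with h0 | h0
      · subst h0; rw [Nat.mod_zero]
      · have ha : a = (a - n) + n := by omega
        have h1 : (phiX Δ φ)^[a] w = (phiX Δ φ)^[a - n] w := by
          conv_lhs => rw [ha]
          rw [Function.iterate_add_apply, hw]
        rw [h1, ih (a - n) (by omega)]
        congr 1
        conv_rhs => rw [ha]
        rw [Nat.add_mod_right]

lemma extend (hY : ∀ x : X, x ∉ Set.range φ → x ∈ Y) (c : ℕ → X) (p : ℕ)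
    (hc : ∀ j, 1 ≤ j → j ≤ p → c j ∈ Δ ∧ phiX Δ φ (c j) = c (j - 1)) :
    ∃ g ∈ XExt Δ φ Y, ∀ j ≤ p, g j = Sum.inl (c j) := by
  classical
  set step : X → X := fun v => if hv : v ∈ Set.range φ then (hv.choose : X) else v with hstep
  have hstepspec : ∀ v : X, v ∉ Y → step v ∈ Δ ∧ phiX Δ φ (step v) = v := by
    intro v hv
    have hr : v ∈ Set.range φ := by
      by_contra h
      exact hv (hY v h)
    have hs : step v = (hr.choose : X) := dif_pos hr
    rw [hs]
    refine ⟨(hr.choose).2, ?_⟩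
    rw [phiX_eq (hr.choose).2]
    exact hr.choose_spec
  set t : ℕ → X := fun k => step^[k] (c p) with ht
  have ht0 : t 0 = c p := rfl
  have htsucc : ∀ k, t (k + 1) = step (t k) := fun k => Function.iterate_succ_apply' _ _ _
  set x : ℕ → X := fun j => if j ≤ p then c j else t (j - p) with hx
  have hx0 : ∀ j ≤ p, x j = c j := fun j hj => if_pos hj
  have hxt : ∀ k, x (p + k) = t k := by
    intro k
    cases k with
    | zero => rw [Nat.add_zero, hx0 p le_rfl, ht0]
    | succ k =>
      show (if p + (k + 1) ≤ p then c (p + (k + 1)) else t (p + (k + 1) - p)) = t (k + 1)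
      rw [if_neg (by omega)]
      congr 1
      omega
  have hxchain : ∀ j, 1 ≤ j → (p < j → t (j - p - 1) ∉ Y) →
      x j ∈ Δ ∧ phiX Δ φ (x j) = x (j - 1) := by
    intro j h1 h2
    by_cases hj : j ≤ p
    · rw [hx0 j hj, hx0 (j - 1) (by omega)]
      exact hc j h1 hj
    · push_neg at hj
      have hxj : x j = t (j - p) := by
        show (if j ≤ p then c j else t (j - p)) = t (j - p)
        rw [if_neg (by omega)]
      have hts : t (j - p) = step (t (j - p - 1)) := by
        rw [show j - p = (j - p - 1) + 1 by omega]
        exact htsucc _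
      have hnotY := h2 hj
      obtain ⟨hsΔ, hsφ⟩ := hstepspec _ hnotY
      rw [hxj, hts]
      refine ⟨hsΔ, ?_⟩
      rw [hsφ]
      by_cases hj1 : j - 1 ≤ p
      · have : j - 1 = p := by omega
        rw [this, hx0 p le_rfl, ← ht0]
        congr 1
        omega
      · rw [show x (j - 1) = t (j - 1 - p) from if_neg (by omega)]
        congr 1
        omega
  have toXchain : ∀ (q : ℕ), (∀ j, 1 ≤ j → j ≤ q → x j ∈ Δ ∧ phiX Δ φ (x j) = x (j - 1)) →
      (∀ n, 1 ≤ n → n ≤ q → ∃ h : x n ∈ Δ, φ ⟨x n, h⟩ = x (n - 1)) := by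
    intro q hq n h1 h2
    obtain ⟨hΔ', hφ'⟩ := hq n h1 h2
    rw [phiX_eq hΔ'] at hφ'
    exact ⟨hΔ', hφ'⟩
  by_cases hfin : ∃ k, t k ∈ Y
  · set K := Nat.find hfin with hK
    have hKY : t K ∈ Y := Nat.find_spec hfin
    have hKmin : ∀ i, i < K → t i ∉ Y := fun i hi => Nat.find_min hfin hi
    refine ⟨fun j => if j ≤ p + K then Sum.inl (x j) else Sum.inr (), ?_, ?_⟩
    · left
      refine Set.mem_iUnion.mpr ⟨p + K, x, fun j hj => if_pos hj, fun j hj => if_neg (by omega),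
        toXchain (p + K) (fun j h1 h2 => hxchain j h1 (fun hp => hKmin _ (by omega))), ?_⟩
      rw [hxt K]
      exact hKY
    · intro j hj
      show (if j ≤ p + K then Sum.inl (x j) else Sum.inr ()) = Sum.inl (c j)
      rw [if_pos (by omega : j ≤ p + K), hx0 j hj]
  · push_neg at hfin
    refine ⟨fun j => Sum.inl (x j), ?_, ?_⟩
    · right
      exact ⟨x, fun j => rfl, fun n h1 => (toXchain n (fun j hj _ => hxchain j hj (fun hp => hfin _)) n h1 le_rfl)⟩
    · intro j hj
      show Sum.inl (x j) = Sum.inl (c j)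
      rw [hx0 j hj]

variable [TopologicalSpace X]

def phiDom (Δ : Set X) (φ : Δ → X) : ℕ → Set X
  | 0 => Set.univ
  | (k + 1) => Δ ∩ phiX Δ φ ⁻¹' phiDom Δ φ k

lemma continuousOn_phiX (hφc : Continuous φ) : ContinuousOn (phiX Δ φ) Δ := by
  rw [continuousOn_iff_continuous_restrict]
  convert hφc using 1
  funext a
  simp [Set.restrict, phiX_eq a.2]

lemma isOpen_phiDom (hΔ : IsOpen Δ) (hφc : Continuous φ) (k : ℕ) :
    IsOpen (phiDom Δ φ k) := by
  induction k with
  | zero => exact isOpen_univ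
  | succ k ih => exact (continuousOn_phiX hφc).isOpen_inter_preimage hΔ ih

lemma mem_phiDom {x : X} {k : ℕ} :
    x ∈ phiDom Δ φ k ↔ ∀ i < k, (phiX Δ φ)^[i] x ∈ Δ := by
  induction k generalizing x with
  | zero => simp [phiDom]
  | succ k ih =>
    constructor
    · rintro ⟨hxΔ, hx⟩ i hi
      cases i with
      | zero => exact hxΔ
      | succ i =>
        rw [Function.iterate_succ_apply]
        exact ih.mp hx i (by omega)
    · intro h
      refine ⟨h 0 (by omega), ih.mpr fun i hi => ?_⟩
      rw [← Function.iterate_succ_apply]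
      exact h (i + 1) (by omega)

lemma phiDom_antitone {k l : ℕ} (h : k ≤ l) : phiDom Δ φ l ⊆ phiDom Δ φ k :=
  fun _ hx => mem_phiDom.mpr fun i hi => mem_phiDom.mp hx i (by omega)

lemma continuousOn_iter (hφc : Continuous φ) (k : ℕ) :
    ContinuousOn ((phiX Δ φ)^[k]) (phiDom Δ φ k) := by
  induction k with
  | zero => simpa using continuousOn_id
  | succ k ih =>
    rw [Function.iterate_succ]
    exact ih.comp ((continuousOn_phiX hφc).mono Set.inter_subset_left) (fun x hx => hx.2)

/-- Orbit facts for a point of `Sper` that is also fixed by the `n`-th iterate. -/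
lemma orbit_facts {w : X} {n : ℕ} (hn : 1 ≤ n) (hw : w ∈ Sper Δ φ Y)
    (hfix : (phiX Δ φ)^[n] w = w) :
    (∀ t, (phiX Δ φ)^[t] w ∈ Δ) ∧ (∀ t, (phiX Δ φ)^[t] w ∉ Y) ∧
      (∀ v, v ∈ Δ → (∃ t, phiX Δ φ v = (phiX Δ φ)^[t] w) → ∃ t, v = (phiX Δ φ)^[t] w) ∧
      (∀ t, (phiX Δ φ)^[n] ((phiX Δ φ)^[t] w) = (phiX Δ φ)^[t] w) := by
  obtain ⟨m, hm, orb, h0, hmm, hstep, hYm, hent⟩ := hw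
  have horb : ∀ i, orb i = (phiX Δ φ)^[i] w := by
    intro i
    induction i with
    | zero => simpa using h0
    | succ i ih =>
      obtain ⟨h, he⟩ := hstep i
      rw [Function.iterate_succ_apply', ← ih, ← he, phiX_eq h]
  have hfm : (phiX Δ φ)^[m] w = w := by rw [← horb m]; exact hmm
  have hmod : ∀ a, (phiX Δ φ)^[a] w = (phiX Δ φ)^[a % m] w := iter_mod hfm
  have hΔt : ∀ t, (phiX Δ φ)^[t] w ∈ Δ := by
    intro t
    rw [hmod t, ← horb (t % m)]
    exact (hstep (t % m)).choose
  have hYt : ∀ t, (phiX Δ φ)^[t] w ∉ Y := by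
    intro t
    rw [hmod t, ← horb (t % m)]
    exact hYm _ (Nat.mod_lt _ hm)
  refine ⟨hΔt, hYt, ?_, ?_⟩
  · intro v hv hφv
    obtain ⟨t, hφv⟩ := hφv
    by_contra hno
    push_neg at hno
    refine hent ⟨v, hv, fun i _ => by rw [horb i]; exact hno i, t % m, Nat.mod_lt _ hm, ?_⟩
    rw [horb, ← hmod, ← hφv, phiX_eq hv]
  · intro t
    rw [← Function.iterate_add_apply, Nat.add_comm, Function.iterate_add_apply, hfix]

lemma Sper_dom {x : X} (hx : x ∈ Sper Δ φ Y) :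
    (∀ k, x ∈ phiDom Δ φ k) ∧ ∃ m, 1 ≤ m ∧ (phiX Δ φ)^[m] x = x := by
  obtain ⟨m, hm, orb, h0, hmm, hstep, hYm, hent⟩ := hx
  have horb : ∀ i, orb i = (phiX Δ φ)^[i] x := by
    intro i
    induction i with
    | zero => simpa using h0
    | succ i ih =>
      obtain ⟨h, he⟩ := hstep i
      rw [Function.iterate_succ_apply', ← ih, ← he, phiX_eq h]
  refine ⟨fun k => mem_phiDom.mpr fun i _ => ?_, m, hm, by rw [← horb m]; exact hmm⟩
  rw [← horb i]
  exact (hstep i).choose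

omit [TopologicalSpace X] in
lemma mem_Shat_of_head {n : ℕ} (hn : 1 ≤ n) {w : X}
    (hΔt : ∀ t, (phiX Δ φ)^[t] w ∈ Δ) (hYt : ∀ t, (phiX Δ φ)^[t] w ∉ Y)
    (hpre : ∀ v, v ∈ Δ → (∃ t, phiX Δ φ v = (phiX Δ φ)^[t] w) →
      ∃ t, v = (phiX Δ φ)^[t] w)
    (hfixt : ∀ t, (phiX Δ φ)^[n] ((phiX Δ φ)^[t] w) = (phiX Δ φ)^[t] w)
    {g : ℕ → X ⊕ Unit} (hg : g ∈ XExt Δ φ Y) (hg0 : g 0 = Sum.inl w) :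
    (⟨g, hg⟩ : ↥(XExt Δ φ Y)) ∈ Shat Δ φ Y n := by
  rcases hg with hfin | hinf
  · exfalso
    obtain ⟨N, x, h1, h2, h3, h4⟩ := Set.mem_iUnion.mp hfin
    have hxorb : ∀ j, j ≤ N → ∃ t, x j = (phiX Δ φ)^[t] w := by
      intro j
      induction j with
      | zero =>
        intro _
        refine ⟨0, ?_⟩
        have := (h1 0 (Nat.zero_le N)).symm.trans hg0
        simpa using Sum.inl.inj this
      | succ j ih =>
        intro hj
        obtain ⟨t, ht⟩ := ih (by omega)
        obtain ⟨hΔ', he⟩ := h3 (j + 1) (by omega) hj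
        refine hpre (x (j + 1)) hΔ' ⟨t, ?_⟩
        rw [phiX_eq hΔ', he]
        simpa using ht
    obtain ⟨t, ht⟩ := hxorb N le_rfl
    exact hYt t (ht ▸ h4)
  · obtain ⟨y, h1, h2⟩ := hinf
    have hchain : ∀ j, 1 ≤ j → y j ∈ Δ ∧ phiX Δ φ (y j) = y (j - 1) := by
      intro j hj
      obtain ⟨h, he⟩ := h2 j hj
      exact ⟨h, by rw [phiX_eq h, he]⟩
    have hyw : y 0 = w := Sum.inl.inj ((h1 0).symm.trans hg0)
    have hyorb : ∀ j, ∃ t, y j = (phiX Δ φ)^[t] w := by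
      intro j
      induction j with
      | zero => exact ⟨0, by simpa using hyw⟩
      | succ j ih =>
        obtain ⟨t, ht⟩ := ih
        refine hpre (y (j + 1)) (hchain (j + 1) (by omega)).1 ⟨t, ?_⟩
        rw [(hchain (j + 1) (by omega)).2]
        simpa using ht
    have yΔ : ∀ j, y j ∈ Δ := by
      intro j
      obtain ⟨t, ht⟩ := hyorb j
      rw [ht]
      exact hΔt t
    have hyper : ∀ j, y (j + n) = y j := by
      intro j
      have hci := chain_iter hchain n j
      obtain ⟨t, ht⟩ := hyorb (j + n)
      rw [ht, hfixt t] at hci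
      rw [ht]
      exact hci
    have hshift : ∀ j, j ≤ n → (phiX Δ φ)^[n - j] (y 0) = y j := by
      intro j hj
      have h := chain_iter hchain (n - j) j
      rw [show j + (n - j) = n by omega] at h
      rw [show y n = y 0 from by simpa using hyper 0] at h
      exact h
    set z : ℕ → ℕ → X :=
      fun i j => if j < i then (phiX Δ φ)^[i - j] (y 0) else y (j - i) with hz
    have hz0 : ∀ i, z i 0 = (phiX Δ φ)^[i] (y 0) := by
      intro i
      show (if 0 < i then (phiX Δ φ)^[i - 0] (y 0) else y (0 - i)) = (phiX Δ φ)^[i] (y 0)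
      rcases Nat.eq_zero_or_pos i with h | h
      · subst h; simp
      · rw [if_pos h, Nat.sub_zero]
    have hziΔ : ∀ i j, z i j ∈ Δ := by
      intro i j
      show (if j < i then (phiX Δ φ)^[i - j] (y 0) else y (j - i)) ∈ Δ
      split
      · rw [hyw]; exact hΔt _
      · exact yΔ _
    have hzchain : ∀ i j, 1 ≤ j → phiX Δ φ (z i j) = z i (j - 1) := by
      intro i j hj
      show phiX Δ φ (if j < i then (phiX Δ φ)^[i - j] (y 0) else y (j - i)) =
        (if j - 1 < i then (phiX Δ φ)^[i - (j - 1)] (y 0) else y ((j - 1) - i))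
      by_cases hlt : j < i
      · rw [if_pos hlt, if_pos (by omega),
          ← Function.iterate_succ_apply' (phiX Δ φ) (i - j) (y 0)]
        congr 1
        omega
      · by_cases heq : j = i
        · rw [if_neg hlt, if_pos (by omega), heq, Nat.sub_self,
            show i - (i - 1) = 1 from by omega, Function.iterate_one]
        · have h3 : i < j := by omega
          rw [if_neg hlt, if_neg (by omega), (hchain (j - i) (by omega)).2]
          congr 1
          omega
    have hzmem : ∀ i, (fun j => Sum.inl (z i j) : ℕ → X ⊕ Unit) ∈ XExt Δ φ Y := by
      intro i
      right
      refine ⟨z i, fun j => rfl, fun j hj => ⟨hziΔ i j, ?_⟩⟩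
      have := hzchain i j hj
      rw [phiX_eq (hziΔ i j)] at this
      exact this
    have hzstep : ∀ i, phiT Δ φ (fun j => Sum.inl (z i j)) =
        (fun j => Sum.inl (z (i + 1) j)) := by
      intro i
      funext j
      cases j with
      | zero =>
        rw [phiT_zero (f := fun j => Sum.inl (z i j)) rfl (hziΔ i 0)]
        show Sum.inl (phiX Δ φ (z i 0)) = Sum.inl (z (i + 1) 0)
        congr 1
        rw [hz0 i, hz0 (i + 1),
          ← Function.iterate_succ_apply' (phiX Δ φ) i (y 0)]
      | succ j =>
        rw [phiT_succ]
        show Sum.inl (z i j) = Sum.inl (z (i + 1) (j + 1))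
        congr 1
        show (if j < i then (phiX Δ φ)^[i - j] (y 0) else y (j - i)) =
          (if j + 1 < i + 1 then (phiX Δ φ)^[(i + 1) - (j + 1)] (y 0) else y ((j + 1) - (i + 1)))
        by_cases h : j < i
        · rw [if_pos h, if_pos (by omega), Nat.succ_sub_succ]
        · rw [if_neg h, if_neg (by omega), Nat.succ_sub_succ]
    refine ⟨fun i => ⟨fun j => Sum.inl (z i j), hzmem i⟩, ?_, ?_, ?_⟩
    · apply Subtype.ext
      funext j
      have hz0j : z 0 j = y j := by
        show (if j < 0 then (phiX Δ φ)^[0 - j] (y 0) else y (j - 0)) = y j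
        rw [if_neg (by omega), Nat.sub_zero]
      show Sum.inl (z 0 j) = g j
      rw [h1 j, hz0j]
    · apply Subtype.ext
      funext j
      have hznj : z n j = y j := by
        show (if j < n then (phiX Δ φ)^[n - j] (y 0) else y (j - n)) = y j
        by_cases h : j < n
        · rw [if_pos h]
          exact hshift j (by omega)
        · rw [if_neg h]
          have hp := hyper (j - n)
          rw [show j - n + n = j by omega] at hp
          exact hp.symm
      show Sum.inl (z n j) = g j
      rw [h1 j, hznj]
    · intro i
      exact ⟨⟨z i 0, hziΔ i 0, rfl⟩, hzstep i⟩

lemma dir2 [LocallyCompactSpace X] [T2Space X]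
    (hΔ : IsOpen Δ) (hφc : Continuous φ)
    (hS : (interior (Sper Δ φ Y)).Nonempty) :
    ∃ n, 1 ≤ n ∧ ∃ B : Set ↥(XExt Δ φ Y), IsOpen B ∧ B.Nonempty ∧ B ⊆ Shat Δ φ Y n := by
  obtain ⟨z₀, hz₀⟩ := hS
  set U₀ := interior (Sper Δ φ Y) with hU₀
  have hU₀o : IsOpen U₀ := isOpen_interior
  have hU₀S : U₀ ⊆ Sper Δ φ Y := interior_subset
  haveI : Nonempty ↥U₀ := ⟨⟨z₀, hz₀⟩⟩
  haveI := hU₀o.locallyCompactSpace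
  set T : ℕ → Set ↥U₀ := fun k => {a | (phiX Δ φ)^[k + 1] (a : X) = (a : X)} with hT
  have hTc : ∀ k, IsClosed (T k) := by
    intro k
    have hcont : Continuous fun a : ↥U₀ => (phiX Δ φ)^[k + 1] (a : X) := by
      rw [show (fun a : ↥U₀ => (phiX Δ φ)^[k + 1] (a : X)) = U₀.restrict ((phiX Δ φ)^[k + 1])
        from rfl]
      refine continuousOn_iff_continuous_restrict.mp ?_
      exact (continuousOn_iter hφc (k + 1)).mono
        (fun x hx => (Sper_dom (hU₀S hx)).1 (k + 1))
    exact isClosed_eq hcont continuous_subtype_val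
  have hTu : ⋃ k, T k = Set.univ := by
    ext a
    simp only [Set.mem_iUnion, Set.mem_univ, iff_true]
    obtain ⟨-, m, hm, hfix⟩ := Sper_dom (hU₀S a.2)
    exact ⟨m - 1, show (phiX Δ φ)^[m - 1 + 1] (a : X) = (a : X) from by
      rw [show m - 1 + 1 = m by omega]; exact hfix⟩
  obtain ⟨k, a, ha⟩ := nonempty_interior_of_iUnion_of_closed hTc hTu
  set n := k + 1 with hnk
  have hn : 1 ≤ n := by omega
  have hnhds : interior (T k) ∈ nhds a := isOpen_interior.mem_nhds ha
  rw [mem_nhds_subtype] at hnhds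
  obtain ⟨u, hu, husub⟩ := hnhds
  obtain ⟨O, hOsub, hOopen, haO⟩ := mem_nhds_iff.mp hu
  set V : Set X := O ∩ U₀ with hV
  have hVo : IsOpen V := hOopen.inter hU₀o
  have haV : (a : X) ∈ V := ⟨haO, a.2⟩
  have hVfix : ∀ x ∈ V, (phiX Δ φ)^[n] x = x := by
    intro x hx
    have h5 : (⟨x, hx.2⟩ : ↥U₀) ∈ T k := interior_subset (husub (hOsub hx.1))
    exact h5
  have hVS : V ⊆ Sper Δ φ Y := fun x hx => hU₀S hx.2
  refine ⟨n, hn, {f : ↥(XExt Δ φ Y) | (f : ℕ → X ⊕ Unit) 0 ∈ Sum.inl '' V}, ?_, ?_, ?_⟩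
  · have hcont : Continuous (fun f : ↥(XExt Δ φ Y) => (f : ℕ → X ⊕ Unit) 0) :=
      (continuous_apply 0).comp continuous_subtype_val
    exact (isOpenMap_inl V hVo).preimage hcont
  · obtain ⟨hΔt, hYt, hpre, hfixt⟩ := orbit_facts hn (hVS haV) (hVfix _ haV)
    set c : ℕ → X := fun j => (phiX Δ φ)^[n * (j + 1) - j] (a : X) with hc
    have hcmem : (fun j => Sum.inl (c j) : ℕ → X ⊕ Unit) ∈ XExt Δ φ Y := by
      right
      refine ⟨c, fun j => rfl, fun j hj => ?_⟩
      have hcΔ : c j ∈ Δ := hΔt _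
      refine ⟨hcΔ, ?_⟩
      have h1 : phiX Δ φ (c j) = (phiX Δ φ)^[n * (j + 1) - j + 1] (a : X) :=
        (Function.iterate_succ_apply' (phiX Δ φ) (n * (j + 1) - j) (a : X)).symm
      have hnj : j ≤ n * j := Nat.le_mul_of_pos_left j (by omega)
      have h2 : n * (j + 1) - j + 1 = (n * j - (j - 1)) + n := by
        have e1 : n * (j + 1) = n * j + n := by ring
        omega
      have h3 : phiX Δ φ (c j) = (phiX Δ φ)^[(n * j - (j - 1)) + n] (a : X) := by
        rw [h1, h2]
      rw [Function.iterate_add_apply, hVfix _ haV] at h3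
      have h4 : c (j - 1) = (phiX Δ φ)^[n * j - (j - 1)] (a : X) := by
        show (phiX Δ φ)^[n * ((j - 1) + 1) - (j - 1)] (a : X) = _
        rw [show j - 1 + 1 = j by omega]
      rw [phiX_eq hcΔ] at h3
      rw [h4]
      exact h3
    refine ⟨⟨fun j => Sum.inl (c j), hcmem⟩, ⟨(a : X), haV, ?_⟩⟩
    show Sum.inl (a : X) = Sum.inl (c 0)
    have : c 0 = (a : X) := by
      show (phiX Δ φ)^[n * (0 + 1) - 0] (a : X) = (a : X)
      rw [show n * (0 + 1) - 0 = n from by simp]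
      exact hVfix _ haV
    rw [this]
  · rintro ⟨g, hg⟩ hmem
    obtain ⟨w, hwV, hweq⟩ := hmem
    obtain ⟨hΔt, hYt, hpre, hfixt⟩ := orbit_facts hn (hVS hwV) (hVfix _ hwV)
    exact mem_Shat_of_head hn hΔt hYt hpre hfixt hg hweq.symm

lemma dir1 (hΔ : IsOpen Δ) (hφc : Continuous φ)
    (hY : ∀ x : X, x ∉ Set.range φ → x ∈ Y) {n : ℕ} (hn : 1 ≤ n)
    (hne : (interior (Shat Δ φ Y n)).Nonempty) :
    ∃ W : Set X, IsOpen W ∧ W.Nonempty ∧ W ⊆ Sper Δ φ Y := by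
  obtain ⟨f₀, hf₀⟩ := hne
  have hnhds : interior (Shat Δ φ Y n) ∈ nhds f₀ := isOpen_interior.mem_nhds hf₀
  rw [mem_nhds_subtype] at hnhds
  obtain ⟨u₁, hu₁, hu₁sub⟩ := hnhds
  obtain ⟨O, hOsub, hOopen, hfO⟩ := mem_nhds_iff.mp hu₁
  obtain ⟨I, u, hu, hpi⟩ := isOpen_pi_iff.mp hOopen _ hfO
  have hB : ∀ (g : ℕ → X ⊕ Unit) (hg : g ∈ XExt Δ φ Y), (∀ k ∈ I, g k ∈ u k) →
      (⟨g, hg⟩ : ↥(XExt Δ φ Y)) ∈ Shat Δ φ Y n := by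
    intro g hg hgk
    have h1 : g ∈ O := hpi (Set.mem_pi.mpr fun k hk => hgk k (Finset.mem_coe.mp hk))
    exact interior_subset (hu₁sub (hOsub h1))
  obtain ⟨hper0, hhead0⟩ := Shat_spec (interior_subset hf₀)
  obtain ⟨x, hx1, hx2, hxper, hx0Δ⟩ := inf_of_periodic hn f₀.2 hper0 hhead0
  have hxΔ : ∀ j, x j ∈ Δ := by
    intro j
    cases j with
    | zero => exact hx0Δ
    | succ j => exact (hx2 (j + 1) (by omega)).1
  have hxiter := chain_iter hx2
  have hxmul : ∀ k, x (k * n) = x 0 := by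
    intro k
    induction k with
    | zero => rw [Nat.zero_mul]
    | succ k ih => rw [Nat.succ_mul, hxper, ih]
  set m := I.sup id with hm
  have hIm : ∀ k ∈ I, k ≤ m := fun k hk => Finset.le_sup (f := id) hk
  set p := n * (m + 2) with hp
  have hpm : m + 2 ≤ p := by
    have := Nat.le_mul_of_pos_left (m + 2) (show 0 < n by omega)
    omega
  have hp2n : 2 * n ≤ p := by
    have h1 : n * 2 ≤ n * (m + 2) := Nat.mul_le_mul_left n (by omega)
    omega
  have hpmn : m + 1 + n ≤ p := by
    have h1 : m + 1 ≤ n * (m + 1) := Nat.le_mul_of_pos_left (m + 1) (by omega)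
    have h2 : n * (m + 2) = n * (m + 1) + n := by ring
    omega
  have hxp : x p = x 0 := by
    rw [hp, Nat.mul_comm]
    exact hxmul (m + 2)
  set W := phiDom Δ φ p ∩
      ⋂ k ∈ I, (phiDom Δ φ p ∩ (phiX Δ φ)^[p - k] ⁻¹' (Sum.inl ⁻¹' u k)) with hW
  have hWo : IsOpen W := by
    refine (isOpen_phiDom hΔ hφc p).inter (isOpen_biInter_finset fun k hk => ?_)
    exact ContinuousOn.isOpen_inter_preimage
      ((continuousOn_iter hφc (p - k)).mono (phiDom_antitone (Nat.sub_le p k)))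
      (isOpen_phiDom hΔ hφc p) ((hu k hk).1.preimage continuous_inl)
  have hz0D : x 0 ∈ phiDom Δ φ p := by
    refine mem_phiDom.mpr fun i hi => ?_
    have h1 := hxiter i (p - i)
    rw [show p - i + i = p by omega, hxp] at h1
    rw [h1]
    exact hxΔ _
  have hz0W : x 0 ∈ W := by
    refine ⟨hz0D, Set.mem_iInter₂.mpr fun k hk => ⟨hz0D, ?_⟩⟩
    have hkp : k ≤ p := le_trans (hIm k hk) (by omega)
    have h1 := hxiter (p - k) k
    rw [show k + (p - k) = p by omega, hxp] at h1
    show Sum.inl ((phiX Δ φ)^[p - k] (x 0)) ∈ u k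
    rw [h1, ← hx1 k]
    exact (hu k hk).2
  refine ⟨W, hWo, ⟨x 0, hz0W⟩, ?_⟩
  intro w hw
  obtain ⟨hwD, hwI'⟩ := hw
  have hwI : ∀ k ∈ I, Sum.inl ((phiX Δ φ)^[p - k] w) ∈ u k := by
    intro k hk
    exact (Set.mem_iInter₂.mp hwI' k hk).2
  set c : ℕ → X := fun j => (phiX Δ φ)^[p - j] w with hc
  have hwiΔ : ∀ i, i < p → (phiX Δ φ)^[i] w ∈ Δ := fun i hi => mem_phiDom.mp hwD i hi
  have hcΔ : ∀ j, 1 ≤ j → j ≤ p → c j ∈ Δ := fun j h1 _ => hwiΔ (p - j) (by omega)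
  have hcstep : ∀ j, 1 ≤ j → j ≤ p → phiX Δ φ (c j) = c (j - 1) := by
    intro j h1 h2
    show phiX Δ φ ((phiX Δ φ)^[p - j] w) = (phiX Δ φ)^[p - (j - 1)] w
    rw [← Function.iterate_succ_apply' (phiX Δ φ) (p - j) w]
    congr 1
    omega
  have hcchain : ∀ j, 1 ≤ j → j ≤ p → c j ∈ Δ ∧ phiX Δ φ (c j) = c (j - 1) :=
    fun j h1 h2 => ⟨hcΔ j h1 h2, hcstep j h1 h2⟩
  have hext : ∀ (q : ℕ) (d : ℕ → X),
      (∀ j, 1 ≤ j → j ≤ q → d j ∈ Δ ∧ phiX Δ φ (d j) = d (j - 1)) →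
      (∀ k ∈ I, k ≤ q ∧ d k = c k) →
      ∃ (g : ℕ → X ⊕ Unit) (hg : g ∈ XExt Δ φ Y),
        (∀ j ≤ q, g j = Sum.inl (d j)) ∧ (⟨g, hg⟩ : ↥(XExt Δ φ Y)) ∈ Shat Δ φ Y n := by
    intro q d hd hdk
    obtain ⟨g, hg, hgj⟩ := extend hY d q hd
    refine ⟨g, hg, hgj, hB g hg ?_⟩
    intro k hk
    obtain ⟨hkq, hdc⟩ := hdk k hk
    rw [hgj k hkq, hdc]
    exact hwI k hk
  obtain ⟨g, hg, hgj, hgS⟩ := hext p c hcchain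
    (fun k hk => ⟨le_trans (hIm k hk) (by omega), rfl⟩)
  obtain ⟨hperg, hheadg⟩ := Shat_spec hgS
  obtain ⟨yg, hy1, hy2, hyper, hy0⟩ := inf_of_periodic hn hg hperg hheadg
  have hyc : ∀ j ≤ p, yg j = c j := by
    intro j hj
    have h1 := hgj j hj
    rw [hy1 j] at h1
    exact Sum.inl.inj h1
  have hymul : ∀ k j, yg (j + k * n) = yg j := by
    intro k
    induction k with
    | zero => intro j; rw [Nat.zero_mul, Nat.add_zero]
    | succ k ih => intro j; rw [Nat.succ_mul, ← Nat.add_assoc, hyper, ih]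
  have hygp : yg p = w := by
    rw [hyc p le_rfl]
    show (phiX Δ φ)^[p - p] w = w
    rw [Nat.sub_self]
    rfl
  have hyg0 : yg 0 = w := by
    have h1 := hymul (m + 2) 0
    rw [Nat.zero_add, show (m + 2) * n = p from by rw [hp, Nat.mul_comm]] at h1
    rw [← h1, hygp]
  have hw_fix : (phiX Δ φ)^[n] w = w := by
    have h2 : yg n = w := by
      have h3 := hyper 0
      rw [Nat.zero_add] at h3
      rw [h3, hyg0]
    have h1 := chain_iter hy2 n 0
    rw [Nat.zero_add, h2, hyg0] at h1
    exact h1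
  have hmodw := iter_mod hw_fix
  have hOΔ : ∀ t, (phiX Δ φ)^[t] w ∈ Δ := by
    intro t
    rw [hmodw t]
    exact hwiΔ (t % n) (lt_of_lt_of_le (Nat.mod_lt t (by omega)) (by omega))
  have hOY : ∀ i, i < n → (phiX Δ φ)^[i] w ∉ Y := by
    intro i hi hiY
    set k := p - i with hk
    have hkm : m ≤ k := by omega
    have hkp : k ≤ p := by omega
    have hfinmem : (fun j => if j ≤ k then Sum.inl (c j) else Sum.inr () : ℕ → X ⊕ Unit)
        ∈ XFin Δ φ Y k := by
      refine ⟨c, fun j hj => if_pos hj, fun j hj => if_neg (by omega), ?_, ?_⟩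
      · intro j h1 h2
        obtain ⟨hΔ', hφ'⟩ := hcchain j h1 (le_trans h2 hkp)
        rw [phiX_eq hΔ'] at hφ'
        exact ⟨hΔ', hφ'⟩
      · show c k ∈ Y
        show (phiX Δ φ)^[p - k] w ∈ Y
        rw [show p - k = i by omega]
        exact hiY
    have hgX : (fun j => if j ≤ k then Sum.inl (c j) else Sum.inr () : ℕ → X ⊕ Unit)
        ∈ XExt Δ φ Y := Or.inl (Set.mem_iUnion.mpr ⟨k, hfinmem⟩)
    have hgS' := hB _ hgX (fun j hj => by
      show (if j ≤ k then Sum.inl (c j) else Sum.inr ()) ∈ u j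
      rw [if_pos (le_trans (hIm j hj) hkm)]
      exact hwI j hj)
    obtain ⟨hperg', hheadg'⟩ := Shat_spec hgS'
    obtain ⟨xh, hxhΔ, hxh2⟩ := hheadg'
    exact fin_not_periodic hn hfinmem hperg' ⟨xh, hxh2⟩
  have hOE : ∀ (v : X) (hv : v ∈ Δ), (∀ i < n, v ≠ (phiX Δ φ)^[i] w) →
      ∀ i₀, i₀ < n → φ ⟨v, hv⟩ ≠ (phiX Δ φ)^[i₀] w := by
    intro v hv hvne i₀ hi₀ hvφ
    have hvp : phiX Δ φ v = (phiX Δ φ)^[i₀] w := by rw [phiX_eq hv]; exact hvφ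
    set q := p - i₀ + 1 with hq
    set d : ℕ → X := fun j => if j ≤ p - i₀ then c j else v with hd
    have hdchain : ∀ j, 1 ≤ j → j ≤ q → d j ∈ Δ ∧ phiX Δ φ (d j) = d (j - 1) := by
      intro j h1 h2
      by_cases hj : j ≤ p - i₀
      · have e1 : d j = c j := if_pos hj
        have e2 : d (j - 1) = c (j - 1) := if_pos (by omega)
        rw [e1, e2]
        exact hcchain j h1 (by omega)
      · have e1 : d j = v := if_neg hj
        have e2 : d (j - 1) = c (j - 1) := if_pos (by omega)
        rw [e1, e2]
        refine ⟨hv, ?_⟩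
        rw [hvp]
        show (phiX Δ φ)^[i₀] w = (phiX Δ φ)^[p - (j - 1)] w
        congr 1
        omega
    obtain ⟨g'', hg'', hgj'', hgS''⟩ := hext q d hdchain (fun k' hk' => by
      have hk'm := hIm k' hk'
      exact ⟨by omega, if_pos (by omega)⟩)
    obtain ⟨hperg'', hheadg''⟩ := Shat_spec hgS''
    obtain ⟨ye, he1, he2, heper, he0⟩ := inf_of_periodic hn hg'' hperg'' hheadg''
    have hec : ∀ j ≤ q, ye j = d j := by
      intro j hj
      have h1 := hgj'' j hj
      rw [he1 j] at h1
      exact Sum.inl.inj h1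
    have hemul : ∀ k j, ye (j + k * n) = ye j := by
      intro k
      induction k with
      | zero => intro j; rw [Nat.zero_mul, Nat.add_zero]
      | succ k ih => intro j; rw [Nat.succ_mul, ← Nat.add_assoc, heper, ih]
    set r := q % n with hr
    have hrn : r < n := Nat.mod_lt _ (by omega)
    have h1 : ye q = v := by
      rw [hec q le_rfl]
      show (if q ≤ p - i₀ then c q else v) = v
      rw [if_neg (by omega)]
    have h2 : ye q = ye r := by
      have h5 := hemul (q / n) r
      rw [show r + q / n * n = q from by rw [hr]; exact Nat.mod_add_div' q n] at h5
      exact h5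
    have h3 : ye r = c r := by
      rw [hec r (by omega)]
      show (if r ≤ p - i₀ then c r else v) = c r
      rw [if_pos (by omega)]
    have h4 : c r = (phiX Δ φ)^[(p - r) % n] w := hmodw (p - r)
    exact hvne ((p - r) % n) (Nat.mod_lt _ (by omega)) (by rw [← h4, ← h3, ← h2, h1])
  refine ⟨n, hn, fun i => (phiX Δ φ)^[i] w, rfl, hw_fix, ?_, hOY, ?_⟩
  · intro i
    refine ⟨hOΔ i, ?_⟩
    show φ ⟨(phiX Δ φ)^[i] w, hOΔ i⟩ = (phiX Δ φ)^[i + 1] w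
    rw [Function.iterate_succ_apply' (phiX Δ φ) i w, phiX_eq (hOΔ i)]
  · rintro ⟨v, hv, hvne, i₀, hi₀, hvφ⟩
    exact hOE v hv hvne i₀ hi₀ hvφ

end Aux



/-- The extended map `φ̃` is topologically free (for every `n ≥ 1` the set
of its periodic points of period `n` has empty interior in `X̃`) if and only if `φ` is
topologically free outside `Y` (the set of periodic points of `φ` whose orbit avoids `Y`
and has no entrance has empty interior in `X`). Periodicity of period `n` at a point `z` is
encoded by the existence of an infinite forward trajectory `orb` (each step staying in the
domain) with `orb 0 = z = orb n`. -/
theorem stmt14 {X : Type*} [TopologicalSpace X] [LocallyCompactSpace X] [T2Space X]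
    (Δ : Set X) (hΔ : IsOpen Δ) (φ : Δ → X) (hφc : Continuous φ)
    (hφp : ∀ K : Set X, IsCompact K → IsCompact (φ ⁻¹' K))
    (Y : Set X) (hYc : IsClosed Y) (hY : ∀ x : X, x ∉ Set.range φ → x ∈ Y) :
    -- `φ̃` is topologically free ...
    (∀ n : ℕ, 1 ≤ n →
      interior {f : XExt Δ φ Y |
        ∃ orb : ℕ → XExt Δ φ Y, orb 0 = f ∧ orb n = f ∧
          ∀ i : ℕ,
            (∃ x ∈ Δ, ((orb i : XExt Δ φ Y) : ℕ → X ⊕ Unit) 0 = Sum.inl x) ∧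
            phiT Δ φ ((orb i : XExt Δ φ Y) : ℕ → X ⊕ Unit) =
              ((orb (i + 1) : XExt Δ φ Y) : ℕ → X ⊕ Unit)} = ∅)
    ↔ -- ... iff `φ` is topologically free outside `Y`
    interior {x : X | ∃ n : ℕ, 1 ≤ n ∧
      ∃ orb : ℕ → X, orb 0 = x ∧ orb n = x ∧
        (∀ i : ℕ, ∃ h : orb i ∈ Δ, φ ⟨orb i, h⟩ = orb (i + 1)) ∧
        -- the orbit `{x, φ(x), …, φ^{n-1}(x)}` does not meet `Y` ...
        (∀ i < n, orb i ∉ Y) ∧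
        -- ... and has no entrance
        ¬∃ (y : X) (hy : y ∈ Δ), (∀ i < n, y ≠ orb i) ∧
          ∃ i < n, φ ⟨y, hy⟩ = orb i} = ∅ := by
  constructor
  · intro hL
    by_contra hS
    have hS' : (interior (Sper Δ φ Y)).Nonempty := Set.nonempty_iff_ne_empty.mpr hS
    obtain ⟨n, hn, B, hBo, hBne, hBsub⟩ := dir2 hΔ hφc hS'
    have h2 : interior (Shat Δ φ Y n) = (∅ : Set ↥(XExt Δ φ Y)) := hL n hn
    obtain ⟨b, hb⟩ := hBne
    have h1 : B ⊆ interior (Shat Δ φ Y n) := interior_maximal hBsub hBo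
    rw [h2] at h1
    exact h1 hb
  · intro hS n hn
    by_contra hne
    have hne' : (interior (Shat Δ φ Y n)).Nonempty := Set.nonempty_iff_ne_empty.mpr hne
    obtain ⟨W, hWo, hWne, hWsub⟩ := dir1 hΔ hφc hY hn hne'
    have h1 : W ⊆ interior (Sper Δ φ Y) := interior_maximal hWsub hWo
    have h2 : interior (Sper Δ φ Y) = (∅ : Set X) := hS
    obtain ⟨w, hw⟩ := hWne
    rw [h2] at h1
    exact h1 hw
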